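/- The integral over ℝ² of (1-|y|²)/(1+|y|²)³ · log(1+|y|²) dy is nonzero (in fact it is strictly negative). -/

import Mathlib

open Real MeasureTheory Set Filter

noncomputable def Faux : ℝ → ℝ := fun r =>
  (Real.log (1 + r ^ 2) * r ^ 2 + r ^ 2 + 1 / 2) / (2 * (1 + r ^ 2) ^ 2)

noncomputable def faux : ℝ → ℝ := fun r =>
  r * ((1 - r ^ 2) / (1 + r ^ 2) ^ 3 * Real.log (1 + r ^ 2))

lemma upos (r : ℝ) : (0 : ℝ) < 1 + r ^ 2 := by positivity

lemma hFderiv (r : ℝ) : HasDerivAt Faux (faux r) r := by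
  have hu : HasDerivAt (fun r : ℝ => 1 + r ^ 2) (2 * r) r := by
    simpa using (hasDerivAt_pow 2 r).const_add 1
  have hpos := upos r
  have hlog : HasDerivAt (fun r : ℝ => Real.log (1 + r ^ 2)) (2 * r / (1 + r ^ 2)) r :=
    hu.log hpos.ne'
  have hr2 : HasDerivAt (fun r : ℝ => r ^ 2) (2 * r) r := by
    simpa using hasDerivAt_pow 2 r
  have hN : HasDerivAt (fun r : ℝ => Real.log (1 + r ^ 2) * r ^ 2 + r ^ 2 + 1 / 2)
      ((2 * r / (1 + r ^ 2)) * r ^ 2 + Real.log (1 + r ^ 2) * (2 * r) + 2 * r) r := by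
    exact ((hlog.mul hr2).add hr2).add_const _
  have hD : HasDerivAt (fun r : ℝ => 2 * (1 + r ^ 2) ^ 2) (2 * (2 * (1 + r ^ 2) * (2 * r))) r := by
    exact (hu.pow 2).const_mul 2 |>.congr_deriv (by ring)
  have hDne : (2 * (1 + r ^ 2) ^ 2) ≠ 0 := by positivity
  have := hN.div hD hDne
  refine this.congr_deriv ?_
  unfold faux
  field_simp
  ring

lemma hFtendsto : Tendsto Faux atTop (nhds 0) := by
  have hu : Tendsto (fun r : ℝ => 1 + r ^ 2) atTop atTop :=
    tendsto_atTop_add_const_left _ 1 (tendsto_pow_atTop two_ne_zero)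
  have hlog : Tendsto (fun u : ℝ => Real.log u / u) atTop (nhds 0) :=
    Real.isLittleO_log_id_atTop.tendsto_div_nhds_zero
  have hinv : Tendsto (fun u : ℝ => u⁻¹) atTop (nhds 0) := tendsto_inv_atTop_zero
  -- Faux r = (log u / u) * (r^2/u) / (2 u) ... instead rewrite Faux in terms of u
  have key : ∀ r : ℝ, Faux r =
      ((Real.log (1 + r ^ 2) / (1 + r ^ 2)) * (r ^ 2 / (1 + r ^ 2))
        + (r ^ 2 + 1 / 2) / (1 + r ^ 2) ^ 2) / 2 := by
    intro r
    have hpos := upos r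
    unfold Faux
    field_simp
    ring
  rw [show (0 : ℝ) = (0 * 1 + 0) / 2 by norm_num]
  refine Tendsto.congr' (EventuallyEq.symm (Eventually.of_forall key)) ?_
  refine Tendsto.div_const ?_ 2
  refine Tendsto.add ?_ ?_
  · refine Tendsto.mul (hlog.comp hu) ?_
    -- r^2/(1+r^2) → 1
    have : Tendsto (fun r : ℝ => 1 - 1 / (1 + r ^ 2)) atTop (nhds 1) := by
      have h1 : Tendsto (fun r : ℝ => 1 / (1 + r ^ 2)) atTop (nhds 0) := by
        simpa [one_div, Function.comp_def] using hinv.comp hu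
      simpa using tendsto_const_nhds.sub h1
    refine this.congr fun r => ?_
    have hpos := upos r
    field_simp
    ring
  · -- (r^2 + 1/2)/(1+r^2)^2 → 0
    have h2 : Tendsto (fun r : ℝ => (r ^ 2 + 1 / 2) / (1 + r ^ 2) ^ 2) atTop (nhds 0) := by
      have key2 : ∀ r : ℝ, (r ^ 2 + 1 / 2) / (1 + r ^ 2) ^ 2 =
          (1 / (1 + r ^ 2)) * ((r ^ 2 + 1 / 2) / (1 + r ^ 2)) := by
        intro r
        rw [div_mul_div_comm, one_mul, ← sq]
      rw [show (0 : ℝ) = 0 * 1 by norm_num]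
      refine Tendsto.congr (fun r => (key2 r).symm) (Tendsto.mul ?_ ?_)
      · simpa [one_div, Function.comp_def] using hinv.comp hu
      · have : Tendsto (fun r : ℝ => 1 - (1 / 2) / (1 + r ^ 2)) atTop (nhds 1) := by
          have h1 : Tendsto (fun r : ℝ => (1 / 2 : ℝ) / (1 + r ^ 2)) atTop (nhds 0) := by
            have := hinv.comp hu
            simpa [div_eq_mul_inv] using this.const_mul (1 / 2 : ℝ)
          simpa using tendsto_const_nhds.sub h1
        refine this.congr fun r => ?_
        have hpos := upos r
        field_simp
        ring
    exact h2

lemma faux_nonpos : ∀ x ∈ Ioi (1 : ℝ), faux x ≤ 0 := by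
  intro x hx
  have hx1 : (1 : ℝ) < x := hx
  have hx0 : (0 : ℝ) ≤ x := by linarith
  unfold faux
  have h1 : 1 - x ^ 2 ≤ 0 := by nlinarith
  have h2 : (0 : ℝ) < (1 + x ^ 2) ^ 3 := by positivity
  have h3 : (0 : ℝ) ≤ Real.log (1 + x ^ 2) := Real.log_nonneg (by nlinarith)
  have : (1 - x ^ 2) / (1 + x ^ 2) ^ 3 * Real.log (1 + x ^ 2) ≤ 0 :=
    mul_nonpos_of_nonpos_of_nonneg (div_nonpos_of_nonpos_of_nonneg h1 h2.le) h3
  exact mul_nonpos_of_nonneg_of_nonpos hx0 this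

lemma faux_cont : Continuous faux := by
  unfold faux
  have h : ∀ r : ℝ, (1 + r ^ 2) ^ 3 ≠ 0 := fun r => by positivity
  fun_prop (disch := intro r; first | exact h r | exact (upos r).ne')

lemma integral_Ioi_one : IntegrableOn faux (Ioi 1) ∧ ∫ x in Ioi (1 : ℝ), faux x = -Faux 1 := by
  have hderiv : ∀ x ∈ Ici (1 : ℝ), HasDerivAt Faux (faux x) x := fun x _ => hFderiv x
  constructor
  · exact integrableOn_Ioi_deriv_of_nonpos' hderiv faux_nonpos hFtendsto
  · rw [integral_Ioi_of_hasDerivAt_of_nonpos' hderiv faux_nonpos hFtendsto]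
    ring

lemma integral_Ioc_zero_one : ∫ x in (0:ℝ)..1, faux x = Faux 1 - 1 / 4 := by
  have : ∫ x in (0:ℝ)..1, faux x = Faux 1 - Faux 0 := by
    refine intervalIntegral.integral_eq_sub_of_hasDerivAt (fun x _ => hFderiv x) ?_
    exact (faux_cont.intervalIntegrable 0 1)
  rw [this]
  norm_num [Faux]

lemma integral_Ioi_zero : IntegrableOn faux (Ioi 0) ∧ ∫ x in Ioi (0 : ℝ), faux x = -(1 / 4) := by
  have hsplit : Ioi (0 : ℝ) = Ioc (0 : ℝ) 1 ∪ Ioi 1 := (Ioc_union_Ioi_eq_Ioi zero_le_one).symm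
  have hInt1 : IntegrableOn faux (Ioc (0:ℝ) 1) :=
    (faux_cont.integrableOn_Icc (a := 0) (b := 1)).mono_set Ioc_subset_Icc_self
  have hInt2 := integral_Ioi_one.1
  have hIntegrable : IntegrableOn faux (Ioi 0) := by
    rw [hsplit]; exact hInt1.union hInt2
  refine ⟨hIntegrable, ?_⟩
  have hdisj : Disjoint (Ioc (0:ℝ) 1) (Ioi 1) := Ioc_disjoint_Ioi le_rfl
  rw [hsplit, setIntegral_union hdisj measurableSet_Ioi hInt1 hInt2]
  have h1 : ∫ x in Ioc (0:ℝ) 1, faux x = Faux 1 - 1 / 4 := by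
    rw [← integral_Ioc_zero_one, intervalIntegral.integral_of_le zero_le_one]
  rw [h1, integral_Ioi_one.2]
  ring

lemma vol_ball : (volume (Metric.ball (0 : EuclideanSpace ℝ (Fin 2)) 1)).toReal = π := by
  rw [EuclideanSpace.volume_ball]
  simp only [Fintype.card_fin]
  rw [← ENNReal.ofReal_pow zero_le_one, ← ENNReal.ofReal_mul (by positivity)]
  rw [ENNReal.toReal_ofReal (by positivity)]
  have h2 : ((2 : ℕ) : ℝ) / 2 + 1 = 2 := by norm_num
  rw [h2, Real.Gamma_two, Real.sq_sqrt Real.pi_nonneg]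
  norm_num

theorem stmt4 :
    (∫ y : EuclideanSpace ℝ (Fin 2),
        (1 - ‖y‖ ^ 2) / (1 + ‖y‖ ^ 2) ^ 3 * Real.log (1 + ‖y‖ ^ 2)) ≠ 0 ∧
    (∫ y : EuclideanSpace ℝ (Fin 2),
        (1 - ‖y‖ ^ 2) / (1 + ‖y‖ ^ 2) ^ 3 * Real.log (1 + ‖y‖ ^ 2)) < 0 := by
  have key : (∫ y : EuclideanSpace ℝ (Fin 2),
      (1 - ‖y‖ ^ 2) / (1 + ‖y‖ ^ 2) ^ 3 * Real.log (1 + ‖y‖ ^ 2)) = -(π / 2) := by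
    have := MeasureTheory.integral_fun_norm_addHaar
      (volume : Measure (EuclideanSpace ℝ (Fin 2)))
      (fun t : ℝ => (1 - t ^ 2) / (1 + t ^ 2) ^ 3 * Real.log (1 + t ^ 2))
    rw [this]
    have hdim : Module.finrank ℝ (EuclideanSpace ℝ (Fin 2)) = 2 := by
      simp [finrank_euclideanSpace]
    rw [hdim, measureReal_def, vol_ball]
    have heq : ∫ y in Ioi (0 : ℝ),
        y ^ (2 - 1) • ((1 - y ^ 2) / (1 + y ^ 2) ^ 3 * Real.log (1 + y ^ 2)) =
        ∫ y in Ioi (0 : ℝ), faux y := by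
      refine setIntegral_congr_fun measurableSet_Ioi fun y _ => ?_
      simp [faux, smul_eq_mul]
    rw [heq, integral_Ioi_zero.2]
    simp [smul_eq_mul]
    ring
  rw [key]
  constructor
  · have := Real.pi_pos; intro h; nlinarith [Real.pi_pos]
  · have := Real.pi_pos; linarith
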